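/- For the sequence defined by f_0 = 1 and f_k = (1 - 1/(2k)) f_{k-1} for k ≥ 1, for every integer n ≥ 2 one has (γ + log n - 1)/π ≤ Σ_{k=1}^{n-1} f_k^2 ≤ (γ + log n)/π, where γ is the Euler–Mascheroni constant and log denotes the natural logarithm. -/

import Mathlib

open Real Finset intervalIntegral

noncomputable def Fw (k : ℕ) : ℝ := ∏ i ∈ range k, (2 * (i:ℝ) + 1) / (2 * i + 2)
noncomputable def Gw (k : ℕ) : ℝ := ∏ i ∈ range k, (2 * (i:ℝ) + 2) / (2 * i + 3)

lemma Fw_pos (k : ℕ) : 0 < Fw k := Finset.prod_pos fun i _ => by positivity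

lemma FG (k : ℕ) : Fw k * Gw k * (2 * k + 1) = 1 := by
  induction k with
  | zero => simp [Fw, Gw]
  | succ m ih =>
    have h2 : (2 * (m:ℝ) + 2) ≠ 0 := by positivity
    have h3 : (2 * (m:ℝ) + 3) ≠ 0 := by positivity
    rw [Fw, Gw, prod_range_succ, prod_range_succ, ← Fw, ← Gw]
    push_cast
    calc Fw m * ((2 * (m:ℝ) + 1) / (2 * m + 2)) * (Gw m * ((2 * m + 2) / (2 * m + 3))) *
          (2 * (m + 1) + 1)
        = Fw m * Gw m * (2 * m + 1) := by field_simp; ring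
      _ = 1 := ih

lemma Gw_eq (k : ℕ) : Gw k = 1 / ((2 * k + 1) * Fw k) := by
  have hF := Fw_pos k
  rw [eq_div_iff (by positivity)]
  linear_combination FG k

lemma wallis_upper (m : ℕ) : π * Fw (m + 1) ^ 2 ≤ 1 / (m + 1) := by
  have h := integral_sin_pow_succ_le (2 * m + 1)
  have he : (2 * m + 1 + 1) = 2 * (m + 1) := by ring
  rw [he, integral_sin_pow_even, integral_sin_pow_odd] at h
  rw [← Fw, ← Gw, Gw_eq, mul_one_div] at h
  have hFm := Fw_pos m
  have hF1 := Fw_pos (m + 1)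
  have hD : (0:ℝ) < (2 * m + 1) * Fw m := by positivity
  have h' : π * Fw (m + 1) * ((2 * m + 1) * Fw m) ≤ 2 := (le_div_iff₀ hD).mp h
  have hF : Fw (m + 1) = (2 * m + 1) / (2 * m + 2) * Fw m := by
    rw [Fw, prod_range_succ, ← Fw]; ring
  have h2 : (2 * (m:ℝ) + 2) ≠ 0 := by positivity
  have hFsq : (2 * (m:ℝ) + 2) * Fw (m + 1) = (2 * m + 1) * Fw m := by
    rw [hF]; field_simp
  have key : π * Fw (m + 1) ^ 2 * (m + 1) * (2 * m + 2) ≤ (2 * m + 2) := by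
    nlinarith [mul_le_mul_of_nonneg_right h' (show (0:ℝ) ≤ (m:ℝ) + 1 by positivity),
      pi_pos, hFsq]
  rw [le_div_iff₀ (show (0:ℝ) < (m:ℝ) + 1 by positivity)]
  nlinarith [key]

lemma wallis_lower (k : ℕ) : 2 / (2 * k + 1) ≤ π * Fw k ^ 2 := by
  have h := integral_sin_pow_succ_le (2 * k)
  rw [integral_sin_pow_even, integral_sin_pow_odd] at h
  rw [← Fw, ← Gw, Gw_eq, mul_one_div] at h
  have hFk := Fw_pos k
  have hD : (0:ℝ) < (2 * k + 1) * Fw k := by positivity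
  have h' : 2 ≤ π * Fw k * ((2 * k + 1) * Fw k) := (div_le_iff₀ hD).mp h
  rw [div_le_iff₀ (show (0:ℝ) < 2 * (k:ℝ) + 1 by positivity)]
  nlinarith [h']

lemma harm_sum (m : ℕ) : ∑ k ∈ Ico 1 (m + 1), (1 / (k:ℝ)) = (harmonic m : ℝ) := by
  induction m with
  | zero => simp [harmonic_zero]
  | succ p ih =>
    rw [Finset.sum_Ico_succ_top (by omega), ih, harmonic_succ]
    push_cast; ring

lemma harm_sum' (m : ℕ) :
    ∑ k ∈ Ico 1 (m + 1), (1 / ((k:ℝ) + 1)) = (harmonic (m + 1) : ℝ) - 1 := by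
  induction m with
  | zero => simp [harmonic_succ, harmonic_zero]
  | succ p ih =>
    rw [Finset.sum_Ico_succ_top (by omega), ih, harmonic_succ (p + 1)]
    push_cast; ring

/-- For the sequence defined by `f 0 = 1` and `f k = (1 - 1/(2k)) * f (k-1)` for `k ≥ 1`,
for every integer `n ≥ 2`,
`(γ + log n - 1)/π ≤ ∑_{k=1}^{n-1} (f k)^2 ≤ (γ + log n)/π`,
where `γ` is the Euler–Mascheroni constant. -/
theorem fhu_sum_of_squares_bounds (f : ℕ → ℝ)
    (hf0 : f 0 = 1)
    (hf : ∀ k : ℕ, 1 ≤ k → f k = (1 - 1 / (2 * (k : ℝ))) * f (k - 1)) :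
    ∀ n : ℕ, 2 ≤ n →
      (Real.eulerMascheroniConstant + Real.log n - 1) / Real.pi ≤
          ∑ k ∈ Finset.Ico 1 n, (f k) ^ 2 ∧
        ∑ k ∈ Finset.Ico 1 n, (f k) ^ 2 ≤
          (Real.eulerMascheroniConstant + Real.log n) / Real.pi := by
  intro n hn
  have hπ := pi_pos
  -- f = Fw
  have hfF : ∀ k, f k = Fw k := by
    intro k
    induction k with
    | zero => simpa [Fw] using hf0
    | succ m ih =>
      rw [hf (m + 1) (by omega)]
      simp only [Nat.add_sub_cancel]
      have hF : Fw (m + 1) = Fw m * ((2 * (m:ℝ) + 1) / (2 * m + 2)) := by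
        rw [Fw, prod_range_succ, ← Fw]
      rw [ih, hF]
      have hm : (2 * ((m:ℝ) + 1)) ≠ 0 := by positivity
      push_cast
      field_simp
      ring
  have hsum : ∑ k ∈ Finset.Ico 1 n, (f k) ^ 2 = ∑ k ∈ Finset.Ico 1 n, (Fw k) ^ 2 :=
    Finset.sum_congr rfl fun k _ => by rw [hfF]
  have hn1 : n - 1 + 1 = n := by omega
  -- harmonic number bounds vs gamma
  have h1 : (harmonic (n - 1) : ℝ) ≤ eulerMascheroniConstant + Real.log n := by
    have := eulerMascheroniSeq_lt_eulerMascheroniConstant (n - 1)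
    rw [eulerMascheroniSeq] at this
    have hc : ((n - 1 : ℕ) : ℝ) + 1 = (n : ℝ) := by
      rw [Nat.cast_sub (by omega)]; ring
    rw [hc] at this
    linarith
  have h2 : eulerMascheroniConstant + Real.log n - 1 ≤ (harmonic n : ℝ) - 1 := by
    have := eulerMascheroniConstant_lt_eulerMascheroniSeq' n
    rw [eulerMascheroniSeq'] at this
    simp only [show n ≠ 0 by omega, if_false] at this
    linarith
  -- sum identities
  have e1 : ∑ k ∈ Ico 1 n, 1 / (π * (k:ℝ)) = (harmonic (n - 1) : ℝ) / π := by
    rw [← harm_sum (n - 1), hn1, Finset.sum_div]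
    exact Finset.sum_congr rfl fun k _ => by ring
  have e2 : ∑ k ∈ Ico 1 n, 1 / (π * ((k:ℝ) + 1)) = ((harmonic n : ℝ) - 1) / π := by
    have hh := harm_sum' (n - 1)
    rw [hn1] at hh
    rw [← hh, Finset.sum_div]
    exact Finset.sum_congr rfl fun k _ => by rw [div_div, mul_comm]
  -- termwise bounds
  have tup : ∀ k ∈ Ico 1 n, (Fw k) ^ 2 ≤ 1 / (π * (k:ℝ)) := by
    intro k hk
    obtain ⟨m, rfl⟩ : ∃ m, k = m + 1 := ⟨k - 1, by have := (mem_Ico.mp hk).1; omega⟩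
    have hw := (le_div_iff₀ (show (0:ℝ) < (m:ℝ) + 1 by positivity)).mp (wallis_upper m)
    rw [le_div_iff₀ (by positivity : (0:ℝ) < π * ((m + 1 : ℕ) : ℝ))]
    push_cast
    nlinarith [hw]
  have tlo : ∀ k ∈ Ico 1 n, 1 / (π * ((k:ℝ) + 1)) ≤ (Fw k) ^ 2 := by
    intro k hk
    have hw := (div_le_iff₀ (show (0:ℝ) < 2 * (k:ℝ) + 1 by positivity)).mp (wallis_lower k)
    rw [div_le_iff₀ (by positivity : (0:ℝ) < π * ((k:ℝ) + 1))]
    nlinarith [hw]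
  rw [hsum]
  constructor
  · calc (eulerMascheroniConstant + Real.log n - 1) / π
        ≤ ((harmonic n : ℝ) - 1) / π := by
          exact div_le_div_of_nonneg_right h2 hπ.le |>.trans_eq rfl
      _ = ∑ k ∈ Ico 1 n, 1 / (π * ((k:ℝ) + 1)) := e2.symm
      _ ≤ ∑ k ∈ Ico 1 n, (Fw k) ^ 2 := Finset.sum_le_sum tlo
  · calc ∑ k ∈ Ico 1 n, (Fw k) ^ 2
        ≤ ∑ k ∈ Ico 1 n, 1 / (π * (k:ℝ)) := Finset.sum_le_sum tup
      _ = (harmonic (n - 1) : ℝ) / π := e1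
      _ ≤ (eulerMascheroniConstant + Real.log n) / π :=
          div_le_div_of_nonneg_right h1 hπ.le |>.trans_eq rfl
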